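/- Let P = (ρ, E) be a polymatroid on a finite set E with |E| = n that additionally satisfies ρ(X) ≤ |X| for all X ⊆ E, let k = ρ(E), and suppose P is non-degenerate (ρ({x}) > 0 for all x ∈ E and d ≥ 2, where d = min{|Y| : Y ⊆ E, ρ(E \ Y) < ρ(E)}). Let r ≥ 1, δ ≥ 2, t ≥ 1 be integers, and suppose there is an information set X₀ ⊆ E (i.e., ρ(X₀) = k and ρ(Y) < k for every Y ⊊ X₀) such that every x ∈ X₀ has t repair sets R_1, …, R_t ⊆ E with: x ∈ R_i for all i; |R_i| ≤ r + δ − 1 for all i; min{|Y| : Y ⊆ R_i, ρ(R_i \ Y) < ρ(R_i)} ≥ δ for all i; and R_i ∩ R_j = {x} for i ≠ j. Then d ≤ n − ⌈k⌉ + 1 − (⌈(t(⌈k⌉ − 1) + 1)/(t(r − 1) + 1)⌉ − 1)(δ − 1). -/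

import Mathlib

/-- A polymatroid given by a real-valued set function on subsets of a finite
ground set. -/
structure PolyMatroid (α : Type) [DecidableEq α] where
  E : Finset α
  rk : Finset α → ℝ
  rk_empty : rk ∅ = 0
  rk_mono : ∀ X Y : Finset α, X ⊆ Y → Y ⊆ E → rk X ≤ rk Y
  rk_submod : ∀ X Y : Finset α, X ⊆ E → Y ⊆ E → rk (X ∪ Y) + rk (X ∩ Y) ≤ rk X + rk Y

namespace PolyMatroid

variable {α : Type} [DecidableEq α]

/-- `d_X = min {|Y| : Y ⊆ X, ρ(X \ Y) < ρ(X)}`. -/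
noncomputable def dist (P : PolyMatroid α) (X : Finset α) : ℕ :=
  sInf {m : ℕ | ∃ Y : Finset α, Y ⊆ X ∧ Y.card = m ∧ P.rk (X \ Y) < P.rk X}

end PolyMatroid


namespace PolyAux

variable {α : Type} [DecidableEq α] (P : PolyMatroid α)

lemma rk_nonneg {X : Finset α} (hX : X ⊆ P.E) : 0 ≤ P.rk X := by
  have h := P.rk_mono ∅ X (Finset.empty_subset X) hX
  rw [P.rk_empty] at h; exact h

/-- if a small set is removed from X with dist X big, rank unchanged -/
lemma rk_sdiff_eq {X Z : Finset α} (hX : X ⊆ P.E) (hZ : Z ⊆ X)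
    (h : Z.card < P.dist X) : P.rk (X \ Z) = P.rk X := by
  by_contra hne
  have hle : P.rk (X \ Z) ≤ P.rk X :=
    P.rk_mono _ _ (Finset.sdiff_subset) hX
  have hlt : P.rk (X \ Z) < P.rk X := lt_of_le_of_ne hle hne
  have hmem : Z.card ∈ {m : ℕ | ∃ Y : Finset α, Y ⊆ X ∧ Y.card = m ∧ P.rk (X \ Y) < P.rk X} :=
    ⟨Z, hZ, rfl, hlt⟩
  have hh := Nat.sInf_le hmem
  rw [PolyMatroid.dist] at h
  omega

/-- peel lemma: if R \ Y spans R and R \ Y ⊆ A then adding Y to A does not increase rank -/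
lemma peel {A R Y : Finset α} (hA : A ⊆ P.E) (hR : R ⊆ P.E) (hY : Y ⊆ R)
    (hspan : R \ Y ⊆ A) (heq : P.rk (R \ Y) = P.rk R) :
    P.rk (A ∪ Y) ≤ P.rk A := by
  have hsub := P.rk_submod A R hA hR
  have hint : P.rk (R \ Y) ≤ P.rk (A ∩ R) := by
    refine P.rk_mono _ _ (fun z hz => Finset.mem_inter.mpr ⟨hspan hz, (Finset.mem_sdiff.mp hz).1⟩) ?_
    exact fun z hz => hA (Finset.mem_inter.mp hz).1
  have hAR : P.rk (A ∪ R) ≤ P.rk A := by rw [heq] at hint; linarith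
  have hmono : P.rk (A ∪ Y) ≤ P.rk (A ∪ R) := by
    refine P.rk_mono _ _ (Finset.union_subset_union_right hY) (Finset.union_subset hA hR)
  linarith

/-- adding a set B containing x with rk B ≤ rk {x} + c adds at most c -/
lemma add_set_le {A B : Finset α} {x : α} {c : ℝ} (hA : A ⊆ P.E) (hB : B ⊆ P.E)
    (hxA : x ∈ A) (hxB : x ∈ B) (hBc : P.rk B ≤ P.rk {x} + c) :
    P.rk (A ∪ B) ≤ P.rk A + c := by
  have hsub := P.rk_submod A B hA hB
  have hint : P.rk {x} ≤ P.rk (A ∩ B) := by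
    refine P.rk_mono _ _ (Finset.singleton_subset_iff.mpr (Finset.mem_inter.mpr ⟨hxA, hxB⟩)) ?_
    exact fun z hz => hA (Finset.mem_inter.mp hz).1
  linarith

lemma add_singleton_le (hcard : ∀ X : Finset α, X ⊆ P.E → P.rk X ≤ (X.card : ℝ))
    {A : Finset α} {y : α} (hA : A ⊆ P.E) (hy : y ∈ P.E) :
    P.rk (A ∪ {y}) ≤ P.rk A + 1 := by
  have hsub := P.rk_submod A {y} hA (Finset.singleton_subset_iff.mpr hy)
  have h1 : P.rk {y} ≤ 1 := by
    have := hcard {y} (Finset.singleton_subset_iff.mpr hy)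
    simpa using this
  have h0 : 0 ≤ P.rk (A ∩ {y}) := rk_nonneg P (fun z hz => hA (Finset.mem_inter.mp hz).1)
  linarith

/-- rank bounded by rank of a member plus the rest of the cardinality -/
lemma rk_le_single_add (hcard : ∀ X : Finset α, X ⊆ P.E → P.rk X ≤ (X.card : ℝ))
    {C : Finset α} {x : α} (hC : C ⊆ P.E) (hx : x ∈ C) :
    P.rk C ≤ P.rk {x} + ((C.card : ℝ) - 1) := by
  classical
  -- general: rk (A ∪ D) ≤ rk A + |D|
  have key : ∀ D : Finset α, D ⊆ P.E → ∀ A : Finset α, A ⊆ P.E →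
      P.rk (A ∪ D) ≤ P.rk A + (D.card : ℝ) := by
    intro D
    induction D using Finset.induction_on with
    | empty => intro _ A hA; simpa using le_refl (P.rk A)
    | insert _ _ hnotmem ih =>
      rename_i y D'
      intro hD A hA
      have hyE : y ∈ P.E := hD (Finset.mem_insert_self y D')
      have hD'E : D' ⊆ P.E := fun z hz => hD (Finset.mem_insert_of_mem hz)
      have h1 : P.rk (A ∪ D') ≤ P.rk A + (D'.card : ℝ) := ih hD'E A hA
      have h2 : P.rk ((A ∪ D') ∪ {y}) ≤ P.rk (A ∪ D') + 1 :=
        add_singleton_le P hcard (Finset.union_subset hA hD'E) hyE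
      have heq : A ∪ insert y D' = (A ∪ D') ∪ {y} := by
        ext z; simp [Finset.mem_insert, Finset.mem_union]
      rw [heq, Finset.card_insert_of_notMem hnotmem]
      push_cast
      linarith
  have h := key (C \ {x}) (fun z hz => hC (Finset.mem_sdiff.mp hz).1) {x}
      (Finset.singleton_subset_iff.mpr (hC hx))
  have heq : {x} ∪ (C \ {x}) = C := by
    rw [Finset.union_comm, Finset.sdiff_union_self_eq_union, Finset.union_eq_left]
    simpa using hx
  rw [heq] at h
  have hcardx : ((C \ {x}).card : ℝ) = (C.card : ℝ) - 1 := by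
    rw [Finset.card_sdiff_of_subset (Finset.singleton_subset_iff.mpr hx)]
    have h1 : 1 ≤ C.card := Finset.card_pos.mpr ⟨x, hx⟩
    rw [Finset.card_singleton]
    push_cast [Nat.cast_sub h1]
    ring
  rw [hcardx] at h
  exact h

end PolyAux

namespace PolyAux

variable {α : Type} [DecidableEq α] (P : PolyMatroid α)

lemma anchor_exists {X0 S : Finset α} (hX0 : X0 ⊆ P.E) (hS : S ⊆ P.E)
    (hlt : P.rk S < P.rk X0) : ∃ x ∈ X0, P.rk S < P.rk (S ∪ {x}) := by
  classical
  by_contra hcon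
  push_neg at hcon
  have claim : ∀ C : Finset α, C ⊆ X0 → P.rk (S ∪ C) ≤ P.rk S := by
    intro C
    induction C using Finset.induction_on with
    | empty => intro _; simp
    | insert _ _ hnotmem ih =>
      rename_i a C'
      intro hsub
      have haX0 : a ∈ X0 := hsub (Finset.mem_insert_self a C')
      have hC' : C' ⊆ X0 := fun z hz => hsub (Finset.mem_insert_of_mem hz)
      have h1 : P.rk (S ∪ C') ≤ P.rk S := ih hC'
      have h2 : P.rk (S ∪ {a}) ≤ P.rk S := hcon a haX0
      have hsm := P.rk_submod (S ∪ C') (S ∪ {a})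
        (Finset.union_subset hS (hC'.trans hX0))
        (Finset.union_subset hS (Finset.singleton_subset_iff.mpr (hX0 haX0)))
      have hintl : P.rk S ≤ P.rk ((S ∪ C') ∩ (S ∪ {a})) := by
        refine P.rk_mono _ _ (Finset.subset_inter Finset.subset_union_left
          Finset.subset_union_left) ?_
        exact fun z hz => (Finset.union_subset hS (hC'.trans hX0)) (Finset.mem_inter.mp hz).1
      have hequ : (S ∪ C') ∪ (S ∪ {a}) = S ∪ insert a C' := by
        ext z; simp [Finset.mem_union, Finset.mem_insert]; tauto
      rw [hequ] at hsm
      linarith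
  have h1 : P.rk X0 ≤ P.rk (S ∪ X0) :=
    P.rk_mono _ _ Finset.subset_union_right (Finset.union_subset hS hX0)
  have h2 := claim X0 (le_refl _)
  linarith

def Peel (S F : Finset α) : Prop :=
  ∀ A : Finset α, A ⊆ P.E → S ⊆ A → Disjoint A F → P.rk (A ∪ F) ≤ P.rk A

lemma peel_mono {S S' F : Finset α} (h : Peel P S F) (hSS : S ⊆ S') : Peel P S' F :=
  fun A hA hSA hd => h A hA (hSS.trans hSA) hd

end PolyAux

namespace PolyAux

variable {α : Type} [DecidableEq α] (P : PolyMatroid α)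

lemma step_lemma
    (hcard : ∀ X : Finset α, X ⊆ P.E → P.rk X ≤ (X.card : ℝ))
    (r δ : ℤ) (t : ℕ) (hr : 1 ≤ r) (hδ : 2 ≤ δ)
    (S F : Finset α) (hSE : S ⊆ P.E) (hFE : F ⊆ P.E) (hSF : Disjoint S F)
    (hpeel : Peel P S F)
    (x : α) (hxE : x ∈ P.E)
    (Rs : Fin t → Finset α)
    (hRs : ∀ i : Fin t, Rs i ⊆ P.E ∧ x ∈ Rs i ∧ ((Rs i).card : ℤ) ≤ r + δ - 1 ∧
      δ ≤ (P.dist (Rs i) : ℤ))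
    (hRij : ∀ i j : Fin t, i ≠ j → Rs i ∩ Rs j = {x})
    (hx : P.rk (S ∪ F) < P.rk ((S ∪ F) ∪ {x})) :
    ∀ u : ℕ, u ≤ t → ∃ S' F' : Finset α,
      S' ⊆ P.E ∧ F' ⊆ P.E ∧ Disjoint S' F' ∧ Peel P S' F' ∧
      S ∪ {x} ⊆ S' ∧ F ⊆ F' ∧
      (∀ z ∈ S', z ∈ S ∨ z = x ∨ ∃ i : Fin t, (i : ℕ) < u ∧ z ∈ Rs i) ∧
      (∀ z ∈ F', z ∈ F ∨ ∃ i : Fin t, (i : ℕ) < u ∧ z ∈ Rs i ∧ z ≠ x) ∧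
      F'.card = F.card + u * (δ - 1).toNat ∧
      P.rk S' ≤ P.rk S + 1 + (u : ℝ) * (((r - 1).toNat : ℕ) : ℝ) := by
  classical
  have hxSF : x ∉ S ∪ F := by
    intro hmem
    have : (S ∪ F) ∪ {x} = S ∪ F :=
      Finset.union_eq_left.mpr (Finset.singleton_subset_iff.mpr hmem)
    rw [this] at hx
    exact lt_irrefl _ hx
  have hxS : x ∉ S := fun h => hxSF (Finset.mem_union_left _ h)
  have hxF : x ∉ F := fun h => hxSF (Finset.mem_union_right _ h)
  have hddZ : (((δ - 1).toNat : ℕ) : ℤ) = δ - 1 := Int.toNat_of_nonneg (by omega)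
  have hrrZ : (((r - 1).toNat : ℕ) : ℤ) = r - 1 := Int.toNat_of_nonneg (by omega)
  intro u
  induction u with
  | zero =>
    intro _
    refine ⟨S ∪ {x}, F, Finset.union_subset hSE (Finset.singleton_subset_iff.mpr hxE),
      hFE, ?_, peel_mono P hpeel Finset.subset_union_left, le_refl _, le_refl _,
      ?_, ?_, by simp, ?_⟩
    · rw [Finset.disjoint_union_left]
      exact ⟨hSF, Finset.disjoint_singleton_left.mpr hxF⟩
    · intro z hz
      rcases Finset.mem_union.mp hz with h | h
      · exact Or.inl h
      · exact Or.inr (Or.inl (Finset.mem_singleton.mp h))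
    · intro z hz; exact Or.inl hz
    · have := add_singleton_le P hcard hSE hxE
      simpa using this
  | succ u ih =>
    intro hu1
    obtain ⟨S', F', hS'E, hF'E, hS'F', hpeel', hSxS', hFF', hS'sub, hF'sub, hF'card, hS'rk⟩ :=
      ih (by omega)
    set dd := (δ - 1).toNat with hdd_def
    set rr := (r - 1).toNat with hrr_def
    have hiu : u < t := by omega
    set i : Fin t := ⟨u, hiu⟩ with hi_def
    obtain ⟨hRE, hxR, hRcard, hRdist⟩ := hRs i
    -- fullness of the repair set R i over S ∪ F ∪ {x}
    have hfull : dd ≤ (Rs i \ ((S ∪ F) ∪ {x})).card := by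
      by_contra hsm
      push_neg at hsm
      set Z := Rs i \ (S ∪ F) with hZ_def
      have hZR : Z ⊆ Rs i := Finset.sdiff_subset
      have hxZ : x ∈ Z := Finset.mem_sdiff.mpr ⟨hxR, hxSF⟩
      have hZins : Z ⊆ insert x (Rs i \ ((S ∪ F) ∪ {x})) := by
        intro z hz
        obtain ⟨hz1, hz2⟩ := Finset.mem_sdiff.mp hz
        by_cases hzx : z = x
        · exact Finset.mem_insert.mpr (Or.inl hzx)
        · refine Finset.mem_insert.mpr (Or.inr (Finset.mem_sdiff.mpr ⟨hz1, ?_⟩))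
          intro hmem
          rcases Finset.mem_union.mp hmem with h | h
          · exact hz2 h
          · exact hzx (Finset.mem_singleton.mp h)
      have hZcard : Z.card ≤ dd := by
        have h1 := Finset.card_le_card hZins
        have h2 := Finset.card_insert_le x (Rs i \ ((S ∪ F) ∪ {x}))
        have hdd1 : 1 ≤ dd := by omega
        omega
      have hZlt : Z.card < P.dist (Rs i) := by
        have h1 : (Z.card : ℤ) ≤ δ - 1 := by
          rw [← hddZ]; exact_mod_cast hZcard
        have : (Z.card : ℤ) < (P.dist (Rs i) : ℤ) := by omega
        exact_mod_cast this
      have heq := rk_sdiff_eq P hRE hZR hZlt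
      have hspan : Rs i \ Z ⊆ S ∪ F := by
        intro z hz
        obtain ⟨hz1, hz2⟩ := Finset.mem_sdiff.mp hz
        by_contra hc
        exact hz2 (Finset.mem_sdiff.mpr ⟨hz1, hc⟩)
      have hSFE : S ∪ F ⊆ P.E := Finset.union_subset hSE hFE
      have hp := peel P hSFE hRE hZR hspan heq
      have hmono : P.rk ((S ∪ F) ∪ {x}) ≤ P.rk ((S ∪ F) ∪ Z) := by
        refine P.rk_mono _ _ (Finset.union_subset_union_right
          (Finset.singleton_subset_iff.mpr hxZ)) (Finset.union_subset hSFE (hZR.trans hRE))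
      linarith
    -- new elements are untouched by S' and F'
    have hnew : ∀ z ∈ Rs i \ ((S ∪ F) ∪ {x}), z ∉ S' ∧ z ∉ F' := by
      intro z hz
      obtain ⟨hzR, hzn⟩ := Finset.mem_sdiff.mp hz
      have hzS : z ∉ S := fun h => hzn (Finset.mem_union_left _ (Finset.mem_union_left _ h))
      have hzF : z ∉ F := fun h => hzn (Finset.mem_union_left _ (Finset.mem_union_right _ h))
      have hzx : z ≠ x := fun h => hzn (Finset.mem_union_right _ (by simp [h]))
      have hfromR : ∀ j : Fin t, (j : ℕ) < u → z ∈ Rs j → False := by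
        intro j hj hzj
        have hij : i ≠ j := by
          intro h
          rw [hi_def] at h
          have : u = (j : ℕ) := by exact congrArg Fin.val h
          omega
        have : z ∈ Rs i ∩ Rs j := Finset.mem_inter.mpr ⟨hzR, hzj⟩
        rw [hRij i j hij] at this
        exact hzx (Finset.mem_singleton.mp this)
      constructor
      · intro hzS'
        rcases hS'sub z hzS' with h | h | ⟨j, hj, hzj⟩
        · exact hzS h
        · exact hzx h
        · exact hfromR j hj hzj
      · intro hzF'
        rcases hF'sub z hzF' with h | ⟨j, hj, hzj, _⟩
        · exact hzF h
        · exact hfromR j hj hzj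
    obtain ⟨Y, hYsub, hYcard⟩ := Finset.exists_subset_card_eq hfull
    have hYR : Y ⊆ Rs i := hYsub.trans Finset.sdiff_subset
    have hYE : Y ⊆ P.E := hYR.trans hRE
    have hYx : x ∉ Y := by
      intro h
      exact (Finset.mem_sdiff.mp (hYsub h)).2 (Finset.mem_union_right _ (by simp))
    have hYS' : ∀ z ∈ Y, z ∉ S' := fun z hz => (hnew z (hYsub hz)).1
    have hYF' : ∀ z ∈ Y, z ∉ F' := fun z hz => (hnew z (hYsub hz)).2
    have hYlt : Y.card < P.dist (Rs i) := by
      have h1 : (Y.card : ℤ) = δ - 1 := by rw [hYcard]; exact hddZ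
      have : (Y.card : ℤ) < (P.dist (Rs i) : ℤ) := by omega
      exact_mod_cast this
    have hrkY := rk_sdiff_eq P hRE hYR hYlt
    set D := Rs i \ (Y ∪ F') with hD_def
    have hxD : x ∈ D := by
      refine Finset.mem_sdiff.mpr ⟨hxR, ?_⟩
      intro h
      rcases Finset.mem_union.mp h with h | h
      · exact hYx h
      · rcases hF'sub x h with h2 | ⟨j, _, _, h3⟩
        · exact hxF h2
        · exact h3 rfl
    have hDRY : D ⊆ Rs i \ Y := by
      intro z hz
      obtain ⟨h1, h2⟩ := Finset.mem_sdiff.mp hz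
      exact Finset.mem_sdiff.mpr ⟨h1, fun h => h2 (Finset.mem_union_left _ h)⟩
    have hxS' : x ∈ S' := hSxS' (Finset.mem_union_right _ (by simp))
    -- rank estimate
    have hRYcard : ((Rs i \ Y).card : ℤ) ≤ r := by
      have h1 : (Rs i \ Y).card = (Rs i).card - dd := by
        rw [Finset.card_sdiff_of_subset hYR, hYcard]
      have h2 : dd ≤ (Rs i).card := by
        rw [← hYcard]; exact Finset.card_le_card hYR
      have h3 : ((Rs i \ Y).card : ℤ) = ((Rs i).card : ℤ) - (dd : ℤ) := by
        rw [h1]; push_cast [Nat.cast_sub h2]; ring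
      omega
    have hRYx : x ∈ Rs i \ Y := Finset.mem_sdiff.mpr ⟨hxR, hYx⟩
    have hRYE : Rs i \ Y ⊆ P.E := Finset.sdiff_subset.trans hRE
    have hrkRY : P.rk (Rs i \ Y) ≤ P.rk {x} + ((rr : ℕ) : ℝ) := by
      have h1 := rk_le_single_add P hcard hRYE hRYx
      have h2 : (((Rs i \ Y).card : ℕ) : ℝ) - 1 ≤ ((rr : ℕ) : ℝ) := by
        have : ((rr : ℕ) : ℝ) = (r : ℝ) - 1 := by
          rw [show ((rr:ℕ):ℝ) = (((rr:ℕ):ℤ):ℝ) by push_cast; ring, hrrZ]; push_cast; ring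
        rw [this]
        have : (((Rs i \ Y).card : ℕ) : ℝ) ≤ (r : ℝ) := by exact_mod_cast hRYcard
        linarith
      linarith
    have haddrk := add_set_le P hS'E hRYE hxS' hRYx hrkRY
    have hS''rk : P.rk (S' ∪ D) ≤ P.rk S' + ((rr : ℕ) : ℝ) := by
      have hmono : P.rk (S' ∪ D) ≤ P.rk (S' ∪ (Rs i \ Y)) :=
        P.rk_mono _ _ (Finset.union_subset_union_right hDRY)
          (Finset.union_subset hS'E hRYE)
      linarith
    -- assemble
    refine ⟨S' ∪ D, F' ∪ Y, ?_, ?_, ?_, ?_, ?_, ?_, ?_, ?_, ?_, ?_⟩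
    · exact Finset.union_subset hS'E ((Finset.sdiff_subset).trans hRE)
    · exact Finset.union_subset hF'E hYE
    · -- disjointness
      refine Finset.disjoint_left.mpr ?_
      intro z hz hz2
      rcases Finset.mem_union.mp hz with h | h
      · rcases Finset.mem_union.mp hz2 with h2 | h2
        · exact Finset.disjoint_left.mp hS'F' h h2
        · exact hYS' z h2 h
      · rcases Finset.mem_union.mp hz2 with h2 | h2
        · exact (Finset.mem_sdiff.mp h).2 (Finset.mem_union_right _ h2)
        · exact (Finset.mem_sdiff.mp h).2 (Finset.mem_union_left _ h2)
    · -- Peel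
      intro A hAE hSA hdisj
      have hS'A : S' ⊆ A := (Finset.subset_union_left).trans hSA
      have hAF' : Disjoint A F' := hdisj.mono_right Finset.subset_union_left
      have hspan : Rs i \ Y ⊆ A ∪ F' := by
        intro z hz
        by_cases hzF' : z ∈ F'
        · exact Finset.mem_union_right _ hzF'
        · refine Finset.mem_union_left _ (hSA (Finset.mem_union_right _ ?_))
          obtain ⟨h1, h2⟩ := Finset.mem_sdiff.mp hz
          exact Finset.mem_sdiff.mpr ⟨h1, fun h => by
            rcases Finset.mem_union.mp h with h | h
            · exact h2 h
            · exact hzF' h⟩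
      have hAF'E : A ∪ F' ⊆ P.E := Finset.union_subset hAE hF'E
      have key1 : P.rk ((A ∪ F') ∪ Y) ≤ P.rk (A ∪ F') :=
        peel P hAF'E hRE hYR hspan hrkY
      have key2 : P.rk (A ∪ F') ≤ P.rk A := hpeel' A hAE hS'A hAF'
      have hequ : A ∪ (F' ∪ Y) = (A ∪ F') ∪ Y := by
        rw [Finset.union_assoc]
      rw [hequ]
      linarith
    · exact hSxS'.trans Finset.subset_union_left
    · exact hFF'.trans Finset.subset_union_left
    · intro z hz
      rcases Finset.mem_union.mp hz with h | h
      · rcases hS'sub z h with h1 | h1 | ⟨j, hj, hzj⟩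
        · exact Or.inl h1
        · exact Or.inr (Or.inl h1)
        · exact Or.inr (Or.inr ⟨j, by omega, hzj⟩)
      · exact Or.inr (Or.inr ⟨i, by simp [hi_def], (Finset.mem_sdiff.mp h).1⟩)
    · intro z hz
      rcases Finset.mem_union.mp hz with h | h
      · rcases hF'sub z h with h1 | ⟨j, hj, hzj, hzx⟩
        · exact Or.inl h1
        · exact Or.inr ⟨j, by omega, hzj, hzx⟩
      · refine Or.inr ⟨i, by simp [hi_def], hYR h, fun hzx => hYx (hzx ▸ h)⟩
    · -- cardinality
      have hdisjFY : Disjoint F' Y := Finset.disjoint_right.mpr hYF'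
      rw [Finset.card_union_of_disjoint hdisjFY, hF'card, hYcard]
      ring
    · -- rank
      have : ((u + 1 : ℕ) : ℝ) * ((rr : ℕ) : ℝ) = (u : ℝ) * ((rr : ℕ) : ℝ) + ((rr : ℕ) : ℝ) := by
        push_cast; ring
      rw [this]
      linarith

end PolyAux

namespace PolyAux

variable {α : Type} [DecidableEq α] (P : PolyMatroid α)

lemma outer_lemma
    (hcard : ∀ X : Finset α, X ⊆ P.E → P.rk X ≤ (X.card : ℝ))
    (r δ : ℤ) (t : ℕ) (hr : 1 ≤ r) (hδ : 2 ≤ δ) (ht : 1 ≤ t)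
    (X0 : Finset α) (hX0E : X0 ⊆ P.E) (hX0rk : P.rk X0 = P.rk P.E)
    (hrep : ∀ x ∈ X0, ∃ Rs : Fin t → Finset α,
      (∀ i : Fin t, Rs i ⊆ P.E ∧ x ∈ Rs i ∧ ((Rs i).card : ℤ) ≤ r + δ - 1 ∧
        δ ≤ (P.dist (Rs i) : ℤ)) ∧
      (∀ i j : Fin t, i ≠ j → Rs i ∩ Rs j = {x}))
    (N q : ℕ)
    (hlt : ∀ j M : ℕ, j < q → M ≤ N →
      (j : ℝ) + (M : ℝ) * (((r - 1).toNat : ℕ) : ℝ) < P.rk P.E) :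
    ∀ j : ℕ, j ≤ q → ∃ S F : Finset α,
      S ⊆ P.E ∧ F ⊆ P.E ∧ Disjoint S F ∧ Peel P S F ∧
      F.card = (min (j * t) N) * (δ - 1).toNat ∧
      P.rk S ≤ (j : ℝ) + ((min (j * t) N : ℕ) : ℝ) * (((r - 1).toNat : ℕ) : ℝ) := by
  classical
  intro j
  induction j with
  | zero =>
    intro _
    refine ⟨∅, ∅, Finset.empty_subset _, Finset.empty_subset _, Finset.disjoint_empty_left _,
      ?_, by simp, ?_⟩
    · intro A hA _ _
      simp
    · rw [P.rk_empty]; simp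
  | succ j ih =>
    intro hj1
    obtain ⟨S, F, hSE, hFE, hSF, hpeel, hFcard, hSrk⟩ := ih (by omega)
    by_cases hMN : N ≤ j * t
    · have hm1 : min (j * t) N = N := by omega
      have hm2 : min ((j + 1) * t) N = N := by
        have : j * t ≤ (j + 1) * t := by nlinarith
        omega
      refine ⟨S, F, hSE, hFE, hSF, hpeel, by rw [hFcard, hm1, hm2], ?_⟩
      rw [hm2]
      rw [hm1] at hSrk
      have : (j : ℝ) ≤ ((j + 1 : ℕ) : ℝ) := by push_cast; linarith
      linarith
    · push_neg at hMN
      have hm1 : min (j * t) N = j * t := by omega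
      set u := min t (N - j * t) with hu_def
      have hu : u ≤ t := min_le_left _ _
      have hu1 : 1 ≤ u := by omega
      have hSFE : S ∪ F ⊆ P.E := Finset.union_subset hSE hFE
      have hrkSF : P.rk (S ∪ F) ≤ P.rk S := by
        have h := hpeel S hSE (le_refl _) hSF
        calc P.rk (S ∪ F) = P.rk (S ∪ F) := rfl
          _ ≤ P.rk S := h
      have hklt : P.rk (S ∪ F) < P.rk X0 := by
        rw [hX0rk]
        have h1 := hlt j (min (j * t) N) (by omega) (min_le_right _ _)
        linarith
      obtain ⟨x, hxX0, hxrk⟩ := anchor_exists P hX0E hSFE hklt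
      obtain ⟨Rs, hRs, hRij⟩ := hrep x hxX0
      obtain ⟨S', F', hS'E, hF'E, hS'F', hpeel', hSxS', hFF', _, _, hF'card, hS'rk⟩ :=
        step_lemma P hcard r δ t hr hδ S F hSE hFE hSF hpeel x (hX0E hxX0) Rs hRs hRij
          hxrk u hu
      have hmu : j * t + u = min ((j + 1) * t) N := by
        have : (j + 1) * t = j * t + t := by ring
        omega
      refine ⟨S', F', hS'E, hF'E, hS'F', hpeel', ?_, ?_⟩
      · rw [hF'card, hFcard, hm1, ← hmu]; ring
      · rw [hm1] at hSrk
        have hc : ((min ((j + 1) * t) N : ℕ) : ℝ) = ((j * t : ℕ) : ℝ) + (u : ℝ) := by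
          rw [← hmu]; push_cast; ring
        rw [hc]
        have hj1c : ((j + 1 : ℕ) : ℝ) = (j : ℝ) + 1 := by push_cast; ring
        rw [hj1c]
        have hcast : ((j * t : ℕ) : ℝ) = ((j * t : ℕ) : ℝ) := rfl
        push_cast at hSrk hS'rk ⊢
        nlinarith [hS'rk, hSrk]
  
end PolyAux

open PolyAux in
/-- Singleton-type bound for `(n,k,d,r,δ,t)_i`-polymatroids:
`d ≤ n − ⌈k⌉ + 1 − (⌈(t(⌈k⌉−1)+1)/(t(r−1)+1)⌉ − 1)(δ − 1)`. -/
theorem stmt16 {α : Type} [DecidableEq α] (P : PolyMatroid α)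
    (hcard : ∀ X : Finset α, X ⊆ P.E → P.rk X ≤ (X.card : ℝ))
    (hnd1 : ∀ x ∈ P.E, 0 < P.rk {x}) (hnd2 : 2 ≤ P.dist P.E)
    (r δ : ℤ) (t : ℕ) (hr : 1 ≤ r) (hδ : 2 ≤ δ) (ht : 1 ≤ t)
    (X0 : Finset α) (hX0E : X0 ⊆ P.E)
    (hX0rk : P.rk X0 = P.rk P.E) (hX0min : ∀ Y : Finset α, Y ⊂ X0 → P.rk Y < P.rk P.E)
    (hrep : ∀ x ∈ X0, ∃ Rs : Fin t → Finset α,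
      (∀ i : Fin t, Rs i ⊆ P.E ∧ x ∈ Rs i ∧ ((Rs i).card : ℤ) ≤ r + δ - 1 ∧
        δ ≤ (P.dist (Rs i) : ℤ)) ∧
      (∀ i j : Fin t, i ≠ j → Rs i ∩ Rs j = {x})) :
    (P.dist P.E : ℤ) ≤ (P.E.card : ℤ) - ⌈P.rk P.E⌉ + 1 -
      (⌈((t : ℚ) * ((⌈P.rk P.E⌉ : ℚ) - 1) + 1) / ((t : ℚ) * ((r : ℚ) - 1) + 1)⌉ - 1) *
        (δ - 1) := by
  classical
  set k : ℝ := P.rk P.E with hk_def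
  set κ : ℤ := ⌈k⌉ with hκ_def
  set a : ℤ := ⌈((t : ℚ) * ((κ : ℚ) - 1) + 1) / ((t : ℚ) * ((r : ℚ) - 1) + 1)⌉ with ha_def
  -- k > 0
  have hk0 : 0 < k := by
    have hne : {m : ℕ | ∃ Y : Finset α, Y ⊆ P.E ∧ Y.card = m ∧ P.rk (P.E \ Y) < P.rk P.E}.Nonempty := by
      by_contra hemp
      rw [Set.not_nonempty_iff_eq_empty] at hemp
      have : P.dist P.E = 0 := by rw [PolyMatroid.dist, hemp, Nat.sInf_empty]
      omega
    obtain ⟨m, Y, hYE, _, hYlt⟩ := hne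
    have h0 : 0 ≤ P.rk (P.E \ Y) := rk_nonneg P Finset.sdiff_subset
    rw [hk_def]; linarith
  have hκ1 : 1 ≤ κ := by
    rw [hκ_def]
    exact Int.ceil_pos.mpr hk0
  have hκk : (κ : ℝ) < k + 1 := by rw [hκ_def]; exact Int.ceil_lt_add_one k
  have hkκ : k ≤ (κ : ℝ) := by rw [hκ_def]; exact Int.le_ceil k
  -- denominator positive
  have hden : (0 : ℚ) < (t : ℚ) * ((r : ℚ) - 1) + 1 := by
    have h1 : (0 : ℚ) ≤ (t : ℚ) := by positivity
    have h2 : (0 : ℚ) ≤ (r : ℚ) - 1 := by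
      have : (1 : ℚ) ≤ (r : ℚ) := by exact_mod_cast hr
      linarith
    nlinarith
  have hnum : (0 : ℚ) < (t : ℚ) * ((κ : ℚ) - 1) + 1 := by
    have h1 : (0 : ℚ) ≤ (t : ℚ) := by positivity
    have h2 : (0 : ℚ) ≤ (κ : ℚ) - 1 := by
      have : (1 : ℚ) ≤ (κ : ℚ) := by exact_mod_cast hκ1
      linarith
    nlinarith
  have ha1 : 1 ≤ a := by
    rw [ha_def]
    exact Int.ceil_pos.mpr (div_pos hnum hden)
  set N : ℕ := (a - 1).toNat with hN_def
  set dd : ℕ := (δ - 1).toNat with hdd_def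
  set rr : ℕ := (r - 1).toNat with hrr_def
  have hNa : (N : ℤ) = a - 1 := Int.toNat_of_nonneg (by omega)
  have hddZ : (dd : ℤ) = δ - 1 := Int.toNat_of_nonneg (by omega)
  have hrrZ : (rr : ℤ) = r - 1 := Int.toNat_of_nonneg (by omega)
  -- key inequality (a-1)(t(r-1)+1) ≤ t(κ-1)
  have hkey : (N : ℤ) * ((t : ℤ) * (r - 1) + 1) ≤ (t : ℤ) * (κ - 1) := by
    have h1 : ((a : ℚ)) < ((t : ℚ) * ((κ : ℚ) - 1) + 1) / ((t : ℚ) * ((r : ℚ) - 1) + 1) + 1 := by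
      rw [ha_def]; exact Int.ceil_lt_add_one _
    have h2 : ((a : ℚ) - 1) * ((t : ℚ) * ((r : ℚ) - 1) + 1) < (t : ℚ) * ((κ : ℚ) - 1) + 1 := by
      rw [← lt_div_iff₀ hden]; linarith
    have h3 : ((a - 1 : ℤ) : ℚ) * (((t : ℤ) * (r - 1) + 1 : ℤ) : ℚ) <
        (((t : ℤ) * (κ - 1) + 1 : ℤ) : ℚ) := by push_cast; push_cast at h2; linarith
    have h4 : (a - 1) * ((t : ℤ) * (r - 1) + 1) < (t : ℤ) * (κ - 1) + 1 := by exact_mod_cast h3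
    rw [hNa]; omega
  set q : ℕ := (N + t - 1) / t with hq_def
  have hmod : t * q + (N + t - 1) % t = N + t - 1 := by
    rw [hq_def]; exact Nat.div_add_mod _ _
  have hmod2 : (N + t - 1) % t < t := Nat.mod_lt _ (by omega)
  have hcomm : q * t = t * q := Nat.mul_comm _ _
  have hqt : q * t ≤ N + t - 1 := by omega
  have hNqt : N ≤ q * t := by omega
  -- main arithmetic: q + N*rr ≤ κ - 1
  have harith : (q : ℤ) + (N : ℤ) * (rr : ℤ) ≤ κ - 1 := by
    have e1 : (q : ℤ) * (t : ℤ) ≤ (N : ℤ) + (t : ℤ) - 1 := by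
      have : ((q * t : ℕ) : ℤ) ≤ ((N + t - 1 : ℕ) : ℤ) := by exact_mod_cast hqt
      push_cast at this
      rw [Nat.cast_sub (by omega : 1 ≤ N + t)] at *
      push_cast at this ⊢
      linarith
    have htZ : (1 : ℤ) ≤ (t : ℤ) := by exact_mod_cast ht
    have h2 : (t : ℤ) * ((q : ℤ) + (N : ℤ) * (rr : ℤ)) < (t : ℤ) * κ := by
      have expand : (t : ℤ) * ((q : ℤ) + (N : ℤ) * (rr : ℤ)) =
          (q : ℤ) * (t : ℤ) + (N : ℤ) * ((t : ℤ) * (rr : ℤ)) := by ring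
      rw [expand, hrrZ]
      nlinarith [hkey]
    have := lt_of_mul_lt_mul_left h2 (by omega : (0 : ℤ) ≤ (t : ℤ))
    omega
  have harithR : (q : ℝ) + (N : ℝ) * (rr : ℝ) ≤ (κ : ℝ) - 1 := by exact_mod_cast harith
  -- run the outer construction
  have hlt : ∀ j M : ℕ, j < q → M ≤ N →
      (j : ℝ) + (M : ℝ) * ((rr : ℕ) : ℝ) < P.rk P.E := by
    intro j M hj hM
    have h1 : (j : ℝ) ≤ (q : ℝ) - 1 := by
      have : (j : ℝ) + 1 ≤ (q : ℝ) := by exact_mod_cast hj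
      linarith
    have h2 : (M : ℝ) * (rr : ℝ) ≤ (N : ℝ) * (rr : ℝ) := by
      have hMN : (M : ℝ) ≤ (N : ℝ) := by exact_mod_cast hM
      have hrr0 : (0 : ℝ) ≤ (rr : ℝ) := by positivity
      nlinarith
    have h3 : (κ : ℝ) - 2 < k := by linarith
    rw [← hk_def]
    linarith
  obtain ⟨S, F, hSE, hFE, hSF, hpeel, hFcard, hSrk⟩ :=
    outer_lemma P hcard r δ t hr hδ ht X0 hX0E hX0rk hrep N q hlt q (le_refl q)
  have hminq : min (q * t) N = N := by omega
  rw [hminq] at hFcard hSrk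
  have hSrk' : P.rk S ≤ (κ : ℝ) - 1 := le_trans hSrk harithR
  have hSFE : S ∪ F ⊆ P.E := Finset.union_subset hSE hFE
  have hrkSF : P.rk (S ∪ F) ≤ P.rk S := hpeel S hSE (le_refl _) hSF
  have hrkSFk : P.rk (S ∪ F) < k := by
    have : (κ : ℝ) - 1 < k := by linarith
    linarith
  -- maximal B containing S ∪ F with rank < k
  set 𝒞 : Finset (Finset α) :=
    P.E.powerset.filter (fun B => (S ∪ F) ⊆ B ∧ P.rk B < k) with h𝒞_def
  have hSF𝒞 : (S ∪ F) ∈ 𝒞 := by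
    rw [h𝒞_def, Finset.mem_filter, Finset.mem_powerset]
    exact ⟨hSFE, le_refl _, hrkSFk⟩
  obtain ⟨B, hB𝒞, hBmax⟩ := Finset.exists_max_image 𝒞 Finset.card ⟨_, hSF𝒞⟩
  rw [h𝒞_def, Finset.mem_filter, Finset.mem_powerset] at hB𝒞
  obtain ⟨hBE, hSFB, hBrk⟩ := hB𝒞
  have hFB : F ⊆ B := (Finset.subset_union_right).trans hSFB
  -- B ≠ E, pick y outside
  have hEB : (P.E \ B).Nonempty := by
    rw [Finset.sdiff_nonempty]
    intro hEB
    have : B = P.E := Finset.Subset.antisymm hBE hEB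
    rw [this] at hBrk
    exact lt_irrefl _ hBrk
  obtain ⟨y, hy⟩ := hEB
  have hyE : y ∈ P.E := (Finset.mem_sdiff.mp hy).1
  have hyB : y ∉ B := (Finset.mem_sdiff.mp hy).2
  have hBy : k ≤ P.rk (B ∪ {y}) := by
    by_contra hc
    push_neg at hc
    have hmem : (B ∪ {y}) ∈ 𝒞 := by
      rw [h𝒞_def, Finset.mem_filter, Finset.mem_powerset]
      exact ⟨Finset.union_subset hBE (Finset.singleton_subset_iff.mpr hyE),
        hSFB.trans Finset.subset_union_left, hc⟩
    have hcard1 : (B ∪ {y}).card = B.card + 1 := by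
      have : B ∪ {y} = insert y B := by ext z; simp [or_comm]
      rw [this, Finset.card_insert_of_notMem hyB]
    have := hBmax _ hmem
    omega
  have hBp1 : P.rk (B ∪ {y}) ≤ P.rk B + 1 := add_singleton_le P hcard hBE hyE
  have hBlow : k - 1 ≤ P.rk B := by linarith
  -- peel F from B
  have hBpeel : P.rk B ≤ ((B.card - F.card : ℕ) : ℝ) := by
    have hA : B \ F ⊆ P.E := (Finset.sdiff_subset).trans hBE
    have hSBF : S ⊆ B \ F := by
      intro z hz
      refine Finset.mem_sdiff.mpr ⟨hSFB (Finset.mem_union_left _ hz), ?_⟩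
      exact fun h => Finset.disjoint_left.mp hSF hz h
    have hdisj : Disjoint (B \ F) F := Finset.sdiff_disjoint
    have h1 := hpeel (B \ F) hA hSBF hdisj
    have h2 : (B \ F) ∪ F = B := Finset.sdiff_union_of_subset hFB
    rw [h2] at h1
    have h3 := hcard (B \ F) hA
    rw [Finset.card_sdiff_of_subset hFB] at h3
    linarith
  have hFcB : F.card ≤ B.card := Finset.card_le_card hFB
  have hBcard : (κ : ℤ) - 1 + (N : ℤ) * (dd : ℤ) ≤ (B.card : ℤ) := by
    have h1 : ((B.card - F.card : ℕ) : ℝ) = (B.card : ℝ) - (F.card : ℝ) := by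
      push_cast [Nat.cast_sub hFcB]; ring
    rw [h1] at hBpeel
    have h2 : (F.card : ℝ) = (N : ℝ) * (dd : ℝ) := by rw [hFcard]; push_cast; ring
    have h3 : (κ : ℝ) - 2 + (N : ℝ) * (dd : ℝ) < (B.card : ℝ) := by
      have : (κ : ℝ) - 2 < k - 1 := by linarith
      linarith
    have h4 : (((κ : ℤ) - 2 + (N : ℤ) * (dd : ℤ) : ℤ) : ℝ) < ((B.card : ℤ) : ℝ) := by
      push_cast; push_cast at h3; linarith
    have h5 := (Int.lt_iff_add_one_le).mp (by exact_mod_cast h4)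
    omega
  -- distance bound
  have hdistB : P.dist P.E ≤ (P.E \ B).card := by
    have hmem : (P.E \ B).card ∈
        {m : ℕ | ∃ Y : Finset α, Y ⊆ P.E ∧ Y.card = m ∧ P.rk (P.E \ Y) < P.rk P.E} := by
      refine ⟨P.E \ B, Finset.sdiff_subset, rfl, ?_⟩
      rw [Finset.sdiff_sdiff_eq_self hBE]
      exact hBrk
    rw [PolyMatroid.dist]
    exact Nat.sInf_le hmem
  have hEcard : (P.E \ B).card = P.E.card - B.card := Finset.card_sdiff_of_subset hBE
  have hBcE : B.card ≤ P.E.card := Finset.card_le_card hBE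
  have hfinal : (P.dist P.E : ℤ) ≤ (P.E.card : ℤ) - (B.card : ℤ) := by
    have h1 : ((P.dist P.E : ℕ) : ℤ) ≤ (((P.E.card - B.card : ℕ)) : ℤ) := by
      exact_mod_cast hEcard ▸ hdistB
    rw [Nat.cast_sub hBcE] at h1
    exact h1
  have hgoal : (P.dist P.E : ℤ) ≤ (P.E.card : ℤ) - κ + 1 - (a - 1) * (δ - 1) := by
    have : (a - 1) * (δ - 1) = (N : ℤ) * (dd : ℤ) := by rw [hNa, hddZ]
    rw [this]
    omega
  exact hgoal
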